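/- arXiv:2010.02958 — 4 statements merged into one kernel-verified Lean document; each statement's English description precedes it below -/
import Mathlib

section
/- Let ζ₉ be a primitive ninth root of unity. The elements u₁ := ζ₉ - ζ₉² - ζ₉⁵ and u₂ := 1 - ζ₉⁴ - ζ₉⁵ lie in Q(ζ₉)⁺, are algebraic units in its ring of integers, and satisfy u₁ ≥ 1 and u₂ ≥ 1 (in the real embedding given by ζ₉ = exp(2πi/9)). -/
noncomputable section

/-- `ζ₉ = exp(2πi/9)`. -/
def z9 : ℂ := Complex.exp (2 * Real.pi * Complex.I / 9)

/-- The totally real cubic field `Q(ζ₉)⁺ = Q(2cos(π/9))`, as a subfield of `ℂ`. -/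
def Kplus : IntermediateField ℚ ℂ :=
  IntermediateField.adjoin ℚ {((2 * Real.cos (Real.pi / 9) : ℝ) : ℂ)}

def u1 : ℂ := z9 - z9 ^ 2 - z9 ^ 5

def u2 : ℂ := 1 - z9 ^ 4 - z9 ^ 5

open Complex Polynomial

/-- `u₁ = ζ₉ - ζ₉² - ζ₉⁵` and `u₂ = 1 - ζ₉⁴ - ζ₉⁵` lie in `Q(ζ₉)⁺`, are algebraic units
(both they and their inverses are algebraic integers), and are real numbers `≥ 1`. -/
theorem stmt2 :
    u1 ∈ Kplus ∧ u2 ∈ Kplus ∧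
    (IsIntegral ℤ u1 ∧ IsIntegral ℤ u1⁻¹) ∧
    (IsIntegral ℤ u2 ∧ IsIntegral ℤ u2⁻¹) ∧
    u1.im = 0 ∧ 1 ≤ u1.re ∧ u2.im = 0 ∧ 1 ≤ u2.re := by
  have pi_pos := Real.pi_pos
  set c : ℝ := 2 * Real.cos (Real.pi / 9) with hc_def
  have hθ : z9 = Complex.exp ((2 * Real.pi / 9 : ℝ) * Complex.I) := by
    unfold z9; push_cast; ring_nf
  have hpow : ∀ n : ℕ, z9 ^ n = Complex.exp (((n : ℝ) * (2 * Real.pi / 9) : ℝ) * Complex.I) := by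
    intro n
    rw [hθ, ← Complex.exp_nat_mul]; push_cast; ring_nf
  have h9 : z9 ^ 9 = 1 := by
    rw [hpow]
    rw [show (((9:ℕ) : ℝ) * (2 * Real.pi / 9) : ℝ) = 2 * Real.pi by push_cast; ring]
    rw [show ((2 * Real.pi : ℝ) : ℂ) * Complex.I = 2 * (Real.pi:ℂ) * Complex.I by push_cast; ring,
      Complex.exp_two_pi_mul_I]
  have hzne : z9 ≠ 0 := by rw [hθ]; exact Complex.exp_ne_zero _
  -- z9^3 ≠ 1
  have h3ne : z9 ^ 3 ≠ 1 := by
    intro h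
    have := congrArg Complex.re h
    rw [hpow, Complex.exp_ofReal_mul_I_re] at this
    rw [show ((3:ℕ):ℝ) * (2 * Real.pi / 9) = Real.pi - Real.pi / 3 by push_cast; ring,
      Real.cos_pi_sub, Real.cos_pi_div_three] at this
    norm_num at this
  have hsum : 1 + z9 ^ 3 + z9 ^ 6 = 0 := by
    have h0 : (z9 ^ 3 - 1) * (1 + z9 ^ 3 + z9 ^ 6) = 0 := by linear_combination h9
    rcases mul_eq_zero.mp h0 with h | h
    · exact absurd (sub_eq_zero.mp h) h3ne
    · exact h
  -- conj z9 = z9^8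
  have hconj : (starRingEnd ℂ) z9 = z9 ^ 8 := by
    have h1 : (starRingEnd ℂ) z9 * z9 = 1 := by
      rw [hθ, ← Complex.exp_conj, ← Complex.exp_add]
      rw [show (starRingEnd ℂ) (((2 * Real.pi / 9 : ℝ) : ℂ) * Complex.I) +
          ((2 * Real.pi / 9 : ℝ) : ℂ) * Complex.I = 0 by
        rw [map_mul, Complex.conj_ofReal, Complex.conj_I]; ring]
      exact Complex.exp_zero
    have h2 : z9 ^ 8 * z9 = 1 := by rw [← pow_succ]; exact h9
    exact mul_right_cancel₀ hzne (h1.trans h2.symm)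
  -- real part of z9
  have hre1 : z9.re = Real.cos (2 * Real.pi / 9) := by
    rw [hθ, Complex.exp_ofReal_mul_I_re]
  have hre4 : (z9 ^ 4).re = -Real.cos (Real.pi / 9) := by
    rw [hpow, Complex.exp_ofReal_mul_I_re,
      show ((4:ℕ):ℝ) * (2 * Real.pi / 9) = Real.pi - Real.pi / 9 by push_cast; ring,
      Real.cos_pi_sub]
  -- u1 = c^2 - 2
  have hu1c : u1 = ((c ^ 2 - 2 : ℝ) : ℂ) := by
    have h8 : u1 = z9 + (starRingEnd ℂ) z9 := by
      rw [hconj]; unfold u1; linear_combination (-z9 ^ 2) * hsum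
    rw [h8, Complex.add_conj, hre1]
    rw [show (2 * Real.pi / 9 : ℝ) = 2 * (Real.pi / 9) by ring, Real.cos_two_mul]
    rw [hc_def]; push_cast; ring
  -- u2 = 1 + c
  have hu2c : u2 = ((1 + c : ℝ) : ℂ) := by
    have h5 : z9 ^ 5 = (starRingEnd ℂ) (z9 ^ 4) := by
      rw [map_pow, hconj, ← pow_mul]
      rw [show (8 * 4 : ℕ) = 5 + 9 * 3 by norm_num, pow_add, pow_mul, h9]
      ring
    have : u2 = 1 - (z9 ^ 4 + (starRingEnd ℂ) (z9 ^ 4)) := by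
      unfold u2; rw [← h5]; ring
    rw [this, Complex.add_conj, hre4, hc_def]
    push_cast; ring
  -- cubic relation
  have hc3 : c ^ 3 = 3 * c + 1 := by
    have h := Real.cos_three_mul (Real.pi / 9)
    rw [show 3 * (Real.pi / 9) = Real.pi / 3 by ring, Real.cos_pi_div_three] at h
    rw [hc_def]; nlinarith [h]
  have hc3' : (c : ℂ) ^ 3 = 3 * (c : ℂ) + 1 := by exact_mod_cast hc3
  -- bounds on c
  have hcpos : 0 < Real.cos (Real.pi / 9) := by
    apply Real.cos_pos_of_mem_Ioo
    constructor <;> [linarith; linarith [Real.pi_pos]]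
  have hcgt : Real.sqrt 3 < c := by
    have h := Real.cos_lt_cos_of_nonneg_of_le_pi (by positivity : (0:ℝ) ≤ Real.pi / 9)
      (by linarith : Real.pi / 6 ≤ Real.pi) (by linarith : Real.pi / 9 < Real.pi / 6)
    rw [Real.cos_pi_div_six] at h
    rw [hc_def]; linarith
  have hc2gt : 3 < c ^ 2 := by
    nlinarith [Real.sq_sqrt (by norm_num : (0:ℝ) ≤ 3), Real.sqrt_nonneg 3]
  -- membership
  have hcmem : ((c : ℝ) : ℂ) ∈ Kplus := by
    rw [hc_def]
    exact IntermediateField.mem_adjoin_simple_self ℚ _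
  have hm1 : u1 ∈ Kplus := by
    rw [hu1c]; push_cast
    exact sub_mem (pow_mem hcmem 2) (ofNat_mem Kplus 2)
  have hm2 : u2 ∈ Kplus := by
    rw [hu2c]; push_cast
    exact add_mem (one_mem _) hcmem
  -- integrality
  have hz9int : IsIntegral ℤ z9 := by
    refine ⟨X ^ 9 - 1, ?_, ?_⟩
    · have := Polynomial.monic_X_pow_sub_C (1 : ℤ) (n := 9) (by norm_num)
      simpa using this
    · simp [h9]
  have h1int : IsIntegral ℤ u1 := by
    unfold u1
    exact ((hz9int.sub (hz9int.pow 2)).sub (hz9int.pow 5))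
  have h2int : IsIntegral ℤ u2 := by
    unfold u2
    exact ((isIntegral_one.sub (hz9int.pow 4)).sub (hz9int.pow 5))
  have h3c : IsIntegral ℤ (3 : ℂ) := by
    have : ((3:ℤ):ℂ) = (3:ℂ) := by norm_num
    exact this ▸ isIntegral_algebraMap
  have hinv1 : u1⁻¹ = 3 - u1 ^ 2 := by
    apply inv_eq_of_mul_eq_one_right
    rw [hu1c]; push_cast
    linear_combination (-(((c:ℂ)) ^ 3 - 3 * (c:ℂ) + 1)) * hc3'
  have hinv2 : u2⁻¹ = 3 * u2 - u2 ^ 2 := by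
    apply inv_eq_of_mul_eq_one_right
    rw [hu2c]; push_cast
    linear_combination (-1 : ℂ) * hc3'
  have h1invint : IsIntegral ℤ u1⁻¹ := by
    rw [hinv1]; exact h3c.sub (h1int.pow 2)
  have h2invint : IsIntegral ℤ u2⁻¹ := by
    rw [hinv2]; exact (h3c.mul h2int).sub (h2int.pow 2)
  refine ⟨hm1, hm2, ⟨h1int, h1invint⟩, ⟨h2int, h2invint⟩, ?_, ?_, ?_, ?_⟩
  · rw [hu1c, Complex.ofReal_im]
  · rw [hu1c, Complex.ofReal_re]; linarith
  · rw [hu2c, Complex.ofReal_im]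
  · rw [hu2c, Complex.ofReal_re]; nlinarith
end
end

section
/- Let σ be the generator of Gal(Q(ζ₉)⁺/Q) determined by σ(cos(π/9)) = cos(5π/9), and let u₁ = ζ₉ - ζ₉² - ζ₉⁵, u₂ = 1 - ζ₉⁴ - ζ₉⁵. Then σ(u₁) = -u₁⁻¹u₂ and σ(u₂) = u₁⁻¹. -/
noncomputable section

namespace Stmt3Aux

def w : ℂ := Complex.exp (Real.pi * Complex.I / 9)

lemma hw9 : w ^ 9 = -1 := by
  rw [w, ← Complex.exp_nat_mul]
  rw [show (9 : ℕ) * ((Real.pi : ℂ) * Complex.I / 9) = Real.pi * Complex.I by push_cast; ring]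
  exact Complex.exp_pi_mul_I

lemma hw3 : w ^ 3 = 1 / 2 + (Real.sqrt 3 / 2 : ℝ) * Complex.I := by
  rw [w, ← Complex.exp_nat_mul]
  rw [show (3 : ℕ) * ((Real.pi : ℂ) * Complex.I / 9) = ((Real.pi / 3 : ℝ) : ℂ) * Complex.I by
    push_cast; ring]
  rw [Complex.exp_mul_I, ← Complex.ofReal_cos, ← Complex.ofReal_sin,
    Real.cos_pi_div_three, Real.sin_pi_div_three]
  push_cast; ring

lemma hw3ne : w ^ 3 + 1 ≠ 0 := by
  rw [hw3]
  intro h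
  have := congrArg Complex.re h
  simp [Complex.add_re, Complex.ofReal_re] at this
  linarith

lemma hw6 : w ^ 6 = w ^ 3 - 1 := by
  have h : (w ^ 3 + 1) * (w ^ 6 - (w ^ 3 - 1)) = 0 := by linear_combination hw9
  rcases mul_eq_zero.mp h with h' | h'
  · exact absurd h' hw3ne
  · linear_combination h'

lemma hz9 : z9 = w ^ 2 := by
  rw [z9, w, ← Complex.exp_nat_mul]
  ring_nf

lemma hwinv : w⁻¹ = -w ^ 8 := by
  have h : w * (-w ^ 8) = 1 := by linear_combination -hw9
  exact inv_eq_of_mul_eq_one_right h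

lemma hw5inv : (w ^ 5)⁻¹ = -w ^ 4 := by
  have h : w ^ 5 * (-w ^ 4) = 1 := by linear_combination -hw9
  exact inv_eq_of_mul_eq_one_right h

lemma hexp1 : Complex.exp (((Real.pi / 9 : ℝ) : ℂ) * Complex.I) = w := by
  rw [w]; congr 1; push_cast; ring

lemma hcos1 : ((Real.cos (Real.pi / 9) : ℝ) : ℂ) = (w - w ^ 8) / 2 := by
  rw [Complex.ofReal_cos, Complex.cos, neg_mul, Complex.exp_neg, hexp1, hwinv]
  ring

lemma hexp5 : Complex.exp (((5 * Real.pi / 9 : ℝ) : ℂ) * Complex.I) = w ^ 5 := by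
  rw [show ((5 * Real.pi / 9 : ℝ) : ℂ) * Complex.I
      = (5 : ℕ) * ((Real.pi : ℂ) * Complex.I / 9) by push_cast; ring,
    Complex.exp_nat_mul, ← w]

lemma hcos5 : ((Real.cos (5 * Real.pi / 9) : ℝ) : ℂ) = (w ^ 5 - w ^ 4) / 2 := by
  rw [Complex.ofReal_cos, Complex.cos, neg_mul, Complex.exp_neg, hexp5, hw5inv]
  ring

lemma coe4 : ((4 : Kplus) : ℂ) = 4 := by norm_cast

lemma coe2 : ((2 : Kplus) : ℂ) = 2 := by norm_cast

end Stmt3Aux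

open Stmt3Aux in
/-- If `σ` is the Galois automorphism of `Q(ζ₉)⁺` sending `cos(π/9)` to `cos(5π/9)`, then
`σ(u₁) = -u₁⁻¹u₂` and `σ(u₂) = u₁⁻¹`. -/
theorem stmt3 (σ : Kplus ≃ₐ[ℚ] Kplus) (c c5 U1 U2 : Kplus)
    (hc : (c : ℂ) = ((Real.cos (Real.pi / 9) : ℝ) : ℂ))
    (hc5 : (c5 : ℂ) = ((Real.cos (5 * Real.pi / 9) : ℝ) : ℂ))
    (hU1 : (U1 : ℂ) = u1) (hU2 : (U2 : ℂ) = u2)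
    (hσ : σ c = c5) :
    σ U1 = -U1⁻¹ * U2 ∧ σ U2 = U1⁻¹ := by
  have hcw : (c : ℂ) = (w - w ^ 8) / 2 := hc.trans hcos1
  have hc5w : (c5 : ℂ) = (w ^ 5 - w ^ 4) / 2 := hc5.trans hcos5
  have hU1K : U1 = 4 * c ^ 2 - 2 := by
    apply Subtype.coe_injective
    push_cast [coe4, coe2]
    rw [hU1, hcw, u1, hz9]
    linear_combination (2 + 2*w^3 - w^4 - w^7 - w^10) * hw6
  have hU2K : U2 = 1 + 2 * c := by
    apply Subtype.coe_injective
    push_cast [coe2]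
    rw [hU2, hcw, u2, hz9]
    linear_combination (-w - w^4) * hw6
  have hkey : (1 + 2 * c5) * U1 = 1 := by
    apply Subtype.coe_injective
    push_cast [coe2]
    rw [hU1, hc5w, u1, hz9]
    linear_combination (-1 + w^2 - w^3 - w^4 + w^5 - w^6 + w^8 - w^9) * hw6
  have hinv : U1⁻¹ = 1 + 2 * c5 := (eq_inv_of_mul_eq_one_left hkey).symm
  have hσU1 : σ U1 = 4 * c5 ^ 2 - 2 := by
    rw [hU1K]
    simp only [map_sub, map_mul, map_pow, map_ofNat, hσ]
  have hσU2 : σ U2 = 1 + 2 * c5 := by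
    rw [hU2K]
    simp only [map_add, map_mul, map_one, map_ofNat, hσ]
  refine ⟨?_, by rw [hσU2, hinv]⟩
  rw [hσU1, hinv, hU2K]
  apply Subtype.coe_injective
  push_cast [coe4, coe2]
  rw [hcw, hc5w]
  linear_combination (-1 + w - w^3 + w^6 - w^7) * hw6
end
end

section
/- Let β := 2 - ζ₉⁴ - ζ₉⁵ ∈ Q(ζ₉)⁺ and u₁ = ζ₉ - ζ₉² - ζ₉⁵, u₂ = 1 - ζ₉⁴ - ζ₉⁵. Then β³ = 3u₁²u₂². -/
noncomputable section

/-- `β = 2 - ζ₉⁴ - ζ₉⁵`. -/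
def beta : ℂ := 2 - z9 ^ 4 - z9 ^ 5

lemma z9_cube_ne_one : z9 ^ 3 ≠ 1 := by
  rw [z9, ← Complex.exp_nat_mul]
  rw [show ((3:ℕ):ℂ) * (2 * ↑Real.pi * Complex.I / 9) = 2 * ↑Real.pi * Complex.I / 3 from by
    push_cast; ring]
  intro hone
  rw [Complex.exp_eq_one_iff] at hone
  obtain ⟨n, hn⟩ := hone
  have hπ : (Real.pi : ℂ) ≠ 0 := Complex.ofReal_ne_zero.mpr Real.pi_ne_zero
  have h2 : (2 : ℂ) * Real.pi * Complex.I ≠ 0 := by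
    simp [hπ, Complex.I_ne_zero]
  have h3 : ((3 * n : ℤ) : ℂ) = 1 := by
    push_cast
    field_simp at hn
    have hz : ((3 : ℂ) * n - 1) * (2 * Real.pi * Complex.I) = 0 := by linear_combination -(2 * Real.pi * Complex.I) * hn
    have := (mul_eq_zero.mp hz).resolve_right h2
    linear_combination this
  have : (3 * n : ℤ) = 1 := by exact_mod_cast h3
  omega

lemma z9_rel : z9 ^ 6 + z9 ^ 3 + 1 = 0 := by
  have h9 : z9 ^ 9 = 1 := by
    rw [z9, ← Complex.exp_nat_mul]
    rw [show ((9:ℕ):ℂ) * (2 * ↑Real.pi * Complex.I / 9) = 2 * ↑Real.pi * Complex.I from by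
      push_cast; ring, Complex.exp_two_pi_mul_I]
  have h : (z9 ^ 3 - 1) * (z9 ^ 6 + z9 ^ 3 + 1) = 0 := by
    linear_combination h9
  rcases mul_eq_zero.mp h with h' | h'
  · exact absurd (sub_eq_zero.mp h') z9_cube_ne_one
  · exact h'

/-- `β³ = 3u₁²u₂²`. -/
theorem stmt6 : beta ^ 3 = 3 * u1 ^ 2 * u2 ^ 2 := by
  have h := z9_rel
  unfold beta u1 u2
  linear_combination (8 - 3*z9^2 - 2*z9^3 - 15*z9^4 - 9*z9^5 + 6*z9^6 + 3*z9^7 + 12*z9^8 + 14*z9^9 - 3*z9^11 - 3*z9^12 - 6*z9^13 - 3*z9^14) * h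
end
end

section
/- Let α ∈ O_{Q(ζ₉)⁺} be an algebraic d-number with N_{Q(ζ₉)⁺/Q}(α) = 9. Then α = uβ² for some unit u ∈ O_{Q(ζ₉)⁺}^×, where β = 2 - ζ₉⁴ - ζ₉⁵. -/
noncomputable section

open Polynomial

def tR : ℝ := 2 * Real.cos (Real.pi / 9)
def xC : ℂ := (tR : ℂ)

lemma tR_cube : tR ^ 3 = 3 * tR + 1 := by
  have h := Real.cos_three_mul (Real.pi / 9)
  rw [show 3 * (Real.pi / 9) = Real.pi / 3 by ring, Real.cos_pi_div_three] at h
  unfold tR; nlinarith [h]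

lemma xC_cube : xC ^ 3 = 3 * xC + 1 := by
  unfold xC
  exact_mod_cast congrArg (Complex.ofReal) tR_cube

lemma xC_mem : xC ∈ Kplus := IntermediateField.subset_adjoin ℚ _ rfl

def τ : Kplus := ⟨xC, xC_mem⟩

lemma τ_coe : (τ : ℂ) = xC := rfl

lemma τ_cube : τ ^ 3 = 3 * τ + 1 := by
  apply Subtype.ext
  push_cast [τ_coe]
  exact xC_cube

def pQ : ℚ[X] := X ^ 3 - C 3 * X - C 1
def pZ : ℤ[X] := X ^ 3 - C 3 * X - C 1

lemma pZ_monic : pZ.Monic := by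
  unfold pZ; monicity!

lemma pQ_monic : pQ.Monic := by
  unfold pQ; monicity!

lemma pQ_natDegree : pQ.natDegree = 3 := by
  unfold pQ; compute_degree!

lemma pQ_irr : Irreducible pQ := by
  rw [Polynomial.irreducible_iff_roots_eq_zero_of_degree_le_three (by norm_num [pQ_natDegree])
    (by norm_num [pQ_natDegree])]
  by_contra h
  obtain ⟨r, hr⟩ := Multiset.exists_mem_of_ne_zero h
  have hne : pQ ≠ 0 := pQ_monic.ne_zero
  have hr0 : pQ.eval r = 0 := (Polynomial.mem_roots hne).mp hr
  have hr1 : r ^ 3 - 3 * r - 1 = 0 := by simpa [pQ] using hr0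
  have haev : Polynomial.aeval r pZ = 0 := by
    simp only [pZ, map_sub, map_mul, map_pow, aeval_X, aeval_C, map_ofNat, map_one]
    linear_combination hr1
  obtain ⟨m, hm, hdvd⟩ := exists_integer_of_is_root_of_monic pZ_monic haev
  have hc0 : pZ.coeff 0 = -1 := by simp [pZ]
  rw [hc0] at hdvd
  have : IsUnit m := isUnit_of_dvd_unit hdvd (by norm_num)
  rcases Int.isUnit_iff.mp this with h1 | h1 <;> subst h1 <;> rw [hm] at hr1 <;> norm_num at hr1

lemma aeval_xC : Polynomial.aeval xC pQ = 0 := by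
  simp only [pQ, map_sub, map_mul, aeval_X, aeval_C, map_pow, map_ofNat, map_one]
  linear_combination xC_cube

lemma xC_integralQ : IsIntegral ℚ xC := ⟨pQ, pQ_monic, aeval_xC⟩

lemma minpoly_xC : minpoly ℚ xC = pQ :=
  (minpoly.eq_of_irreducible_of_monic pQ_irr aeval_xC pQ_monic).symm

instance Kplus_fd : FiniteDimensional ℚ Kplus :=
  IntermediateField.adjoin.finiteDimensional xC_integralQ

lemma finrank_Kplus : Module.finrank ℚ Kplus = 3 := by
  have h := IntermediateField.adjoin.finrank xC_integralQ
  rw [minpoly_xC, pQ_natDegree] at h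
  exact h

def r2C : ℂ := xC ^ 2 - xC - 2
def r3C : ℂ := 2 - xC ^ 2

lemma factorC (y : ℂ) : y ^ 3 - 3 * y - 1 = (y - xC) * (y - r2C) * (y - r3C) := by
  unfold r2C r3C
  linear_combination (-(1 - xC) * y + (-xC ^ 2 + xC + 1)) * xC_cube

lemma mem_of_root {y : ℂ} (hy : y ^ 3 - 3 * y - 1 = 0) : y ∈ Kplus := by
  rw [factorC y] at hy
  have h2 : (2 : ℂ) ∈ Kplus := by
    have h := Kplus.add_mem Kplus.one_mem Kplus.one_mem
    norm_num at h
    rw [show (2:ℂ) = 1 + 1 by norm_num]; exact Kplus.add_mem Kplus.one_mem Kplus.one_mem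
  rcases mul_eq_zero.mp hy with h | h
  · rcases mul_eq_zero.mp h with h | h
    · rw [sub_eq_zero.mp h]; exact xC_mem
    · rw [sub_eq_zero.mp h]
      exact Kplus.sub_mem (Kplus.sub_mem (Kplus.pow_mem xC_mem 2) xC_mem) h2
  · rw [sub_eq_zero.mp h]
    exact Kplus.sub_mem h2 (Kplus.pow_mem xC_mem 2)

lemma Kplus_eq_adjoin_rootSet : Kplus = IntermediateField.adjoin ℚ (pQ.rootSet ℂ) := by
  apply le_antisymm
  · apply IntermediateField.adjoin.mono
    intro y hy
    rw [Set.mem_singleton_iff] at hy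
    subst hy
    rw [Polynomial.mem_rootSet]
    exact ⟨pQ_monic.ne_zero, aeval_xC⟩
  · rw [IntermediateField.adjoin_le_iff]
    intro y hy
    have h0 : Polynomial.aeval y pQ = 0 := (Polynomial.mem_rootSet.mp hy).2
    apply mem_of_root
    have : y ^ 3 - 3 * y - 1 = Polynomial.aeval y pQ := by
      simp only [pQ, map_sub, map_mul, aeval_X, aeval_C, map_pow, map_ofNat, map_one]
    rw [this, h0]


lemma Kplus_isSplittingField : pQ.IsSplittingField ℚ Kplus :=
  Kplus_eq_adjoin_rootSet ▸
    IntermediateField.adjoin_rootSet_isSplittingField (IsAlgClosed.splits (pQ.map (algebraMap ℚ ℂ)))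

instance Kplus_galois : IsGalois ℚ Kplus :=
  haveI := Kplus_isSplittingField
  IsGalois.of_separable_splitting_field (p := pQ) pQ_irr.separable

lemma xC_integralZ : IsIntegral ℤ xC :=
  ⟨pZ, pZ_monic, by
    show Polynomial.aeval xC pZ = 0
    rw [pZ, map_sub, map_sub, map_pow, map_mul, aeval_X, aeval_C, aeval_C]
    simp only [eq_intCast]
    push_cast
    linear_combination xC_cube⟩

lemma integral_comb (a b c : ℤ) : IsIntegral ℤ ((a : ℂ) * xC ^ 2 + (b : ℂ) * xC + (c : ℂ)) := by
  have hint : ∀ m : ℤ, IsIntegral ℤ ((m : ℂ)) := fun m => isIntegral_algebraMap (x := m)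
  exact (((hint a).mul (xC_integralZ.pow 2)).add ((hint b).mul xC_integralZ)).add (hint c)

lemma z9_sum : z9 ^ 4 + z9 ^ 5 = -xC := by
  have h4 : z9 ^ 4 = Complex.exp (((8 * Real.pi / 9 : ℝ) : ℂ) * Complex.I) := by
    rw [z9, ← Complex.exp_nat_mul]
    congr 1
    push_cast
    ring
  have h5 : z9 ^ 5 = Complex.exp (((10 * Real.pi / 9 : ℝ) : ℂ) * Complex.I) := by
    rw [z9, ← Complex.exp_nat_mul]
    congr 1
    push_cast
    ring
  rw [h4, h5, Complex.exp_mul_I, Complex.exp_mul_I, ← Complex.ofReal_cos, ← Complex.ofReal_sin,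
    ← Complex.ofReal_cos, ← Complex.ofReal_sin]
  have hc8 : Real.cos (8 * Real.pi / 9) = -Real.cos (Real.pi / 9) := by
    rw [show 8 * Real.pi / 9 = Real.pi - Real.pi / 9 by ring, Real.cos_pi_sub]
  have hs8 : Real.sin (8 * Real.pi / 9) = Real.sin (Real.pi / 9) := by
    rw [show 8 * Real.pi / 9 = Real.pi - Real.pi / 9 by ring, Real.sin_pi_sub]
  have hc10 : Real.cos (10 * Real.pi / 9) = -Real.cos (Real.pi / 9) := by
    rw [show 10 * Real.pi / 9 = Real.pi + Real.pi / 9 by ring, Real.cos_add]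
    simp
  have hs10 : Real.sin (10 * Real.pi / 9) = -Real.sin (Real.pi / 9) := by
    rw [show 10 * Real.pi / 9 = Real.pi + Real.pi / 9 by ring, Real.sin_add]
    simp
  rw [hc8, hs8, hc10, hs10]
  unfold xC tR
  push_cast
  ring


/-- `x ∈ Q(ζ₉)⁺` is an algebraic unit: both `x` and `x⁻¹` are algebraic integers. -/
def IsUnitInt (x : Kplus) : Prop :=
  IsIntegral ℤ (x : ℂ) ∧ IsIntegral ℤ ((x⁻¹ : Kplus) : ℂ)

/-- `α` is an algebraic d-number in `O_{Q(ζ₉)⁺}`: a nonzero algebraic integer such that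
`α/σ(α)` is an algebraic unit for every `σ ∈ Gal(Q(ζ₉)⁺/Q)`. -/
def IsDNumber (α : Kplus) : Prop :=
  α ≠ 0 ∧ IsIntegral ℤ (α : ℂ) ∧
    ∀ σ : Kplus ≃ₐ[ℚ] Kplus, IsUnitInt (α / σ α)

lemma IsUnitInt_one : IsUnitInt 1 := by
  constructor
  · rw [OneMemClass.coe_one]; exact isIntegral_one
  · rw [inv_one, OneMemClass.coe_one]; exact isIntegral_one

lemma IsUnitInt.mul' {x y : Kplus} (hx : IsUnitInt x) (hy : IsUnitInt y) :
    IsUnitInt (x * y) := by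
  constructor
  · push_cast
    exact hx.1.mul hy.1
  · rw [mul_inv]
    push_cast
    exact hx.2.mul hy.2


/-- An algebraic d-number in `O_{Q(ζ₉)⁺}` of field norm `9` is a unit multiple of the square of
`β = 2 - ζ₉⁴ - ζ₉⁵`. -/
theorem stmt10 (B α : Kplus) (hB : (B : ℂ) = 2 - z9 ^ 4 - z9 ^ 5)
    (hα : IsDNumber α) (hn : Algebra.norm ℚ α = 9) :
    ∃ u : Kplus, IsUnitInt u ∧ α = u * B ^ 2 := by
  obtain ⟨hα0, hαint, hαu⟩ := hα
  have hcard : Fintype.card (Kplus ≃ₐ[ℚ] Kplus) = 3 := by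
    rw [← Nat.card_eq_fintype_card, IsGalois.card_aut_eq_finrank, finrank_Kplus]
  have hNorm : ∏ σ : Kplus ≃ₐ[ℚ] Kplus, σ α = 9 := by
    rw [← Algebra.norm_eq_prod_automorphisms, hn]
    norm_num
  set v := ∏ σ : Kplus ≃ₐ[ℚ] Kplus, (α / σ α) with hv
  have hvu : IsUnitInt v :=
    Finset.prod_induction _ _ (fun a b ha hb => ha.mul' hb) IsUnitInt_one (fun σ _ => hαu σ)
  have h9 : (9 : Kplus) ≠ 0 := by norm_num
  have hveq : v = α ^ 3 / 9 := by
    rw [hv, Finset.prod_div_distrib, Finset.prod_const, Finset.card_univ, hcard, hNorm]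
  have hα3 : α ^ 3 = 9 * v := by
    rw [hveq]
    field_simp
  -- B = 2 + τ
  have h2K : ((2 : Kplus) : ℂ) = 2 := by norm_cast
  have hτB : B = 2 + τ := by
    apply Subtype.ext
    show (B : ℂ) = ((2 + τ : Kplus) : ℂ)
    rw [hB]
    push_cast [τ_coe, h2K]
    linear_combination -z9_sum
  set w : Kplus := 2 * τ ^ 2 + 5 * τ + 3 with hwdef
  set w' : Kplus := 7 * τ ^ 2 - 11 * τ - 4 with hw'def
  have hB3 : B ^ 3 = 3 * w := by
    rw [hτB, hwdef]
    linear_combination τ_cube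
  have hww' : w * w' = 1 := by
    rw [hwdef, hw'def]
    linear_combination (14 * τ + 13) * τ_cube
  have hwne : w ≠ 0 := by
    intro h
    rw [h, zero_mul] at hww'
    exact zero_ne_one hww'
  have h3ne : (3 : Kplus) ≠ 0 := by norm_num
  have hBne : B ≠ 0 := by
    intro h
    rw [h, zero_pow (by norm_num)] at hB3
    exact hwne (by
      have := hB3.symm
      rcases mul_eq_zero.mp this with h' | h'
      · exact absurd h' h3ne
      · exact h')
  have hw'inv : w' = w⁻¹ := eq_inv_of_mul_eq_one_left (by rw [mul_comm]; exact hww')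
  have hwcoe : ((w : Kplus) : ℂ) = ((2 : ℤ) : ℂ) * xC ^ 2 + ((5 : ℤ) : ℂ) * xC + ((3 : ℤ) : ℂ) := by
    rw [hwdef]
    push_cast [τ_coe]
    norm_cast
  have hw'coe : ((w' : Kplus) : ℂ) = ((7 : ℤ) : ℂ) * xC ^ 2 + ((-11 : ℤ) : ℂ) * xC + ((-4 : ℤ) : ℂ) := by
    have h1 : ((w' : Kplus) : ℂ) = 7 * xC ^ 2 - 11 * xC - 4 := by
      rw [hw'def]
      push_cast [τ_coe]
      norm_cast
    rw [h1]
    push_cast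
    ring
  have hwu : IsUnitInt w := by
    constructor
    · rw [hwcoe]; exact integral_comb 2 5 3
    · rw [← hw'inv, hw'coe]; exact integral_comb 7 (-11) (-4)
  have hw'u : IsUnitInt w' := by
    constructor
    · rw [hw'coe]; exact integral_comb 7 (-11) (-4)
    · have hwi : w'⁻¹ = w := by rw [hw'inv, inv_inv]
      rw [hwi, hwcoe]; exact integral_comb 2 5 3
  refine ⟨α / B ^ 2, ?_, ?_⟩
  · have hu3 : (α / B ^ 2) ^ 3 = v * w' ^ 2 := by
      have hB6 : (B ^ 2) ^ 3 = 9 * w ^ 2 := by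
        rw [show (B ^ 2) ^ 3 = (B ^ 3) ^ 2 by ring, hB3]
        ring
      rw [div_pow, hα3, hB6, hw'inv]
      field_simp
    have huu : IsUnitInt (v * w' ^ 2) := by
      have : v * w' ^ 2 = v * (w' * w') := by ring
      rw [this]
      exact hvu.mul' (hw'u.mul' hw'u)
    constructor
    · apply IsIntegral.of_pow (n := 3) (by norm_num)
      have : ((α / B ^ 2 : Kplus) : ℂ) ^ 3 = (((α / B ^ 2) ^ 3 : Kplus) : ℂ) := by
        push_cast
        ring
      rw [this, hu3]
      exact huu.1
    · apply IsIntegral.of_pow (n := 3) (by norm_num)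
      have hcoe : (((α / B ^ 2)⁻¹ : Kplus) : ℂ) ^ 3 = ((((α / B ^ 2)⁻¹) ^ 3 : Kplus) : ℂ) := by
        push_cast
        ring
      rw [hcoe, inv_pow, hu3]
      exact huu.2
  · exact (div_mul_cancel₀ α (pow_ne_zero 2 hBne)).symm
end
end
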